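/- For every integer r ≥ 1, the Wiener polarity index of the zig-zag nanotube ZT(r,3) equals 24r − 3. -/

import Mathlib

/-- The zig-zag nanotube `ZT(r,h)` with `r` layers of hexagons, each containing `h` hexagons:
vertex set `ZMod (2h) × {0,…,r}`; ring edges join `(i,j)` and `(i+1,j)`, and vertical edges
join `(i,j)` and `(i,j+1)` when the parity of `i` equals the parity of `j`. -/
def ZT (r h : ℕ) : SimpleGraph (ZMod (2 * h) × Fin (r + 1)) :=
  SimpleGraph.fromRel (fun p q =>
    (p.2 = q.2 ∧ q.1 = p.1 + 1) ∨
    (p.1 = q.1 ∧ (q.2 : ℕ) = (p.2 : ℕ) + 1 ∧ p.1.val % 2 = (p.2 : ℕ) % 2))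

/-- The Wiener polarity index of a simple graph: the number of unordered pairs
of vertices at (shortest-path) distance `3`. -/
noncomputable def wienerPolarity {V : Type*} (G : SimpleGraph V) : ℕ :=
  Nat.card {p : Sym2 V // Sym2.lift ⟨fun u v => G.dist u v, fun _ _ => SimpleGraph.dist_comm⟩ p = 3}

section WienerAux

open Finset

theorem two_mul_sym2_card {V : Type*} [Fintype V] [DecidableEq V]
    (f : V → V → ℕ) (hf : ∀ u v, f u v = f v u) (hirr : ∀ u, f u u ≠ 3) :
    2 * Nat.card {p : Sym2 V // Sym2.lift ⟨f, hf⟩ p = 3}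
      = (Finset.univ.filter fun q : V × V => f q.1 q.2 = 3).card := by
  classical
  rw [Nat.card_eq_fintype_card, Fintype.card_subtype]
  have hmem : ∀ q ∈ (Finset.univ.filter fun q : V × V => f q.1 q.2 = 3),
      Sym2.mk q.1 q.2 ∈ (Finset.univ.filter fun p : Sym2 V => Sym2.lift ⟨f, hf⟩ p = 3) := by
    rintro ⟨u, v⟩ hq
    simp only [mem_filter, mem_univ, true_and] at hq ⊢
    simpa using hq
  have hfib : ∀ p ∈ (Finset.univ.filter fun p : Sym2 V => Sym2.lift ⟨f, hf⟩ p = 3),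
      ((Finset.univ.filter fun q : V × V => f q.1 q.2 = 3).filter
        (fun q => Sym2.mk q.1 q.2 = p)).card = 2 := by
    intro p hp
    induction p using Sym2.ind with
    | _ u v =>
      simp only [mem_filter, mem_univ, true_and, Sym2.lift_mk] at hp
      have hne : u ≠ v := fun h => hirr u (by simpa [h] using hp)
      have hset : ((Finset.univ.filter fun q : V × V => f q.1 q.2 = 3).filter
          (fun q => Sym2.mk q.1 q.2 = Sym2.mk u v)) = {(u, v), (v, u)} := by
        ext ⟨a, b⟩
        simp only [mem_filter, mem_univ, true_and, Sym2.eq_iff, Prod.ext_iff,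
          Prod.swap_prod_mk, mem_insert, mem_singleton]
        constructor
        · rintro ⟨hab, ⟨h1, h2⟩ | ⟨h1, h2⟩⟩
          · exact Or.inl ⟨h1, h2⟩
          · exact Or.inr ⟨h1, h2⟩
        · rintro (⟨h1, h2⟩ | ⟨h1, h2⟩) <;> subst h1 <;> subst h2
          · exact ⟨hp, Or.inl ⟨rfl, rfl⟩⟩
          · exact ⟨by rw [hf]; exact hp, Or.inr ⟨rfl, rfl⟩⟩
      rw [hset, Finset.card_insert_of_notMem (by simp [Prod.ext_iff]; exact fun h => (hne h).elim),
        Finset.card_singleton]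
  rw [Finset.card_eq_sum_card_fiberwise hmem, Finset.sum_congr rfl hfib,
    Finset.sum_const, smul_eq_mul, mul_comm]


def AdjC (a b : ZMod (2*3)) (j k : ℕ) : Prop :=
  (j = k ∧ (b = a + 1 ∨ a = b + 1)) ∨
  (a = b ∧ ((k = j + 1 ∧ a.val % 2 = j % 2) ∨ (j = k + 1 ∧ a.val % 2 = k % 2)))

lemma hp_add (x : ZMod (2*3)) : (x+1).val % 2 = (x.val + 1) % 2 := by revert x; decide
lemma hp_sub (x : ZMod (2*3)) : (x-1).val % 2 = (x.val + 1) % 2 := by revert x; decide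

lemma AdjC.step {a b : ZMod (2*3)} {j k : ℕ} (h : AdjC a b j k) : j ≤ k + 1 ∧ k ≤ j + 1 := by
  rcases h with ⟨h1, _⟩ | ⟨_, ⟨h1, _⟩ | ⟨h1, _⟩⟩ <;> omega

lemma AdjC.shift_up {a b : ZMod (2*3)} {j k : ℕ} (h : AdjC a b j k) :
    AdjC (a-1) (b-1) (j+1) (k+1) := by
  rcases h with ⟨hjk, hab | hab⟩ | ⟨hab, ⟨hk, hp⟩ | ⟨hj, hp⟩⟩
  · exact Or.inl ⟨by omega, Or.inl (by rw [hab]; ring)⟩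
  · exact Or.inl ⟨by omega, Or.inr (by rw [hab]; ring)⟩
  · exact Or.inr ⟨by rw [hab], Or.inl ⟨by omega, by have := hp_sub a; omega⟩⟩
  · exact Or.inr ⟨by rw [hab], Or.inr ⟨by omega, by have := hp_sub a; omega⟩⟩

lemma AdjC.shift_down {a b : ZMod (2*3)} {j k : ℕ} (h : AdjC a b j k)
    (hj : 1 ≤ j) (hk : 1 ≤ k) : AdjC (a+1) (b+1) (j-1) (k-1) := by
  rcases h with ⟨hjk, hab | hab⟩ | ⟨hab, ⟨hk', hp⟩ | ⟨hj', hp⟩⟩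
  · exact Or.inl ⟨by omega, Or.inl (by rw [hab])⟩
  · exact Or.inl ⟨by omega, Or.inr (by rw [hab])⟩
  · exact Or.inr ⟨by rw [hab], Or.inl ⟨by omega, by have := hp_add a; omega⟩⟩
  · exact Or.inr ⟨by rw [hab], Or.inr ⟨by omega, by have := hp_add a; omega⟩⟩

/-- parity of ring-neighbours differ -/
lemma ring_parity {a b : ZMod (2*3)} (h : b = a + 1) : b.val % 2 ≠ a.val % 2 := by
  subst h; have := hp_add a; omega

lemma chain_no_top {s : ℕ} {a b c d : ZMod (2*3)} {ju jv m n : ℕ}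
    (hju : ju ≤ s) (hjv : jv ≤ s) (hn : n ≤ s + 1)
    (h1 : AdjC a c ju m) (h2 : AdjC c d m n) (h3 : AdjC d b n jv)
    (hna : ¬ AdjC a b ju jv) : m ≤ s ∧ n ≤ s := by
  have key1 : m ≤ s := by
    by_contra hm
    have hm' : m = ju + 1 ∧ c = a ∧ a.val % 2 = ju % 2 := by
      rcases h1 with ⟨h, _⟩ | ⟨hab, ⟨hk, hp⟩ | ⟨hj, hp⟩⟩
      · omega
      · exact ⟨hk, hab.symm, hp⟩
      · omega
    obtain ⟨hm1, hca, hpa⟩ := hm'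
    have hju' : ju = s := by have := h1.step; omega
    rcases h2 with ⟨hmn, hcd | hcd⟩ | ⟨hcd, ⟨hk, hp⟩ | ⟨hj, hp⟩⟩
    · -- n = m = s+1, d = c ± 1; then h3 must be vertical down with parity clash
      have hd' : n = jv + 1 ∧ d = b ∧ d.val % 2 = jv % 2 := by
        rcases h3 with ⟨h, _⟩ | ⟨hab, ⟨hk, hp⟩ | ⟨hj, hp⟩⟩
        · omega
        · omega
        · exact ⟨hj, hab, hp⟩
      obtain ⟨hn1, hdb, hpd⟩ := hd'
      have : d.val % 2 ≠ c.val % 2 := ring_parity hcd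
      rw [hca] at this
      omega
    · have hd' : n = jv + 1 ∧ d = b ∧ d.val % 2 = jv % 2 := by
        rcases h3 with ⟨h, _⟩ | ⟨hab, ⟨hk, hp⟩ | ⟨hj, hp⟩⟩
        · omega
        · omega
        · exact ⟨hj, hab, hp⟩
      obtain ⟨hn1, hdb, hpd⟩ := hd'
      have : c.val % 2 ≠ d.val % 2 := ring_parity hcd
      rw [hca] at this
      omega
    · omega
    · -- m = n+1, c = d, vertical down: then n = ju and chain gives adjacency a b
      have hnju : n = ju := by omega
      subst hca
      subst hnju
      rw [← hcd] at h3
      exact hna h3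
  refine ⟨key1, ?_⟩
  by_contra hn'
  have hn1 : n = s + 1 := by omega
  have hd' : n = jv + 1 ∧ d = b ∧ d.val % 2 = jv % 2 := by
    rcases h3 with ⟨h, _⟩ | ⟨hab, ⟨hk, hp⟩ | ⟨hj, hp⟩⟩
    · omega
    · omega
    · exact ⟨hj, hab, hp⟩
  obtain ⟨hnjv, hdb, hpd⟩ := hd'
  -- h2 : AdjC c d m n with n = s+1 > m: must be vertical up: c = d, m = s
  have hc' : n = m + 1 ∧ c = d := by
    rcases h2 with ⟨h, _⟩ | ⟨hab, ⟨hk, hp⟩ | ⟨hj, hp⟩⟩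
    · omega
    · exact ⟨hk, hab⟩
    · omega
  obtain ⟨hnm, hcd⟩ := hc'
  have hmjv : m = jv := by omega
  apply hna
  have : AdjC a c ju jv := hmjv ▸ h1
  rw [hcd, hdb] at this
  exact this

lemma common_no_top {s : ℕ} {a b c : ZMod (2*3)} {ju jv m : ℕ}
    (hju : ju ≤ s) (hjv : jv ≤ s)
    (h1 : AdjC a c ju m) (h2 : AdjC c b m jv)
    (hne : ¬ (a = b ∧ ju = jv)) : m ≤ s := by
  by_contra hm
  have hm' : m = ju + 1 ∧ c = a ∧ a.val % 2 = ju % 2 := by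
    rcases h1 with ⟨h, _⟩ | ⟨hab, ⟨hk, hp⟩ | ⟨hj, hp⟩⟩
    · omega
    · exact ⟨hk, hab.symm, hp⟩
    · omega
  obtain ⟨hm1, hca, hpa⟩ := hm'
  have hb' : m = jv + 1 ∧ c = b := by
    rcases h2 with ⟨h, _⟩ | ⟨hab, ⟨hk, hp⟩ | ⟨hj, hp⟩⟩
    · omega
    · omega
    · exact ⟨hj, hab⟩
  obtain ⟨hm2, hcb⟩ := hb'
  exact hne ⟨hca ▸ hcb ▸ rfl, by omega⟩

abbrev ZTV (r : ℕ) := ZMod (2*3) × Fin (r + 1)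

instance instDecAdjC (a b : ZMod (2*3)) (j k : ℕ) : Decidable (AdjC a b j k) := by
  unfold AdjC; infer_instance

def P3 (r : ℕ) (u v : ZTV r) : Prop :=
  (∃ w : ZTV r, AdjC u.1 w.1 u.2.val w.2.val ∧
     ∃ x : ZTV r, AdjC w.1 x.1 w.2.val x.2.val ∧ AdjC x.1 v.1 x.2.val v.2.val) ∧
  ¬ AdjC u.1 v.1 u.2.val v.2.val ∧
  (∀ w : ZTV r, ¬(AdjC u.1 w.1 u.2.val w.2.val ∧ AdjC w.1 v.1 w.2.val v.2.val)) ∧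
  u ≠ v

instance instDecP3 (r : ℕ) (u v : ZTV r) : Decidable (P3 r u v) := by
  unfold P3; infer_instance

lemma ne_iff {r : ℕ} (u v : ZTV r) : u ≠ v ↔ ¬(u.1 = v.1 ∧ u.2.val = v.2.val) := by
  simp [Ne, Prod.ext_iff, Fin.ext_iff]

def upv (s : ℕ) (p : ZTV s) : ZTV (s+1) := (p.1, ⟨p.2.val, by omega⟩)
def dnv (s : ℕ) (p : ZTV (s+1)) : ZTV s := (p.1, ⟨min p.2.val s, by omega⟩)

@[simp] lemma upv_fst (s : ℕ) (p : ZTV s) : (upv s p).1 = p.1 := rfl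
@[simp] lemma upv_val (s : ℕ) (p : ZTV s) : (upv s p).2.val = p.2.val := rfl
@[simp] lemma dnv_fst (s : ℕ) (p : ZTV (s+1)) : (dnv s p).1 = p.1 := rfl
lemma dnv_val (s : ℕ) (p : ZTV (s+1)) (h : p.2.val ≤ s) : (dnv s p).2.val = p.2.val := by
  simp [dnv]; omega

lemma P3_up {s : ℕ} {u v : ZTV s} (h : P3 s u v) : P3 (s+1) (upv s u) (upv s v) := by
  obtain ⟨⟨w, h1, x, h2, h3⟩, hna, hcn, hne⟩ := h
  refine ⟨⟨upv s w, h1, upv s x, h2, h3⟩, hna, ?_, ?_⟩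
  · rintro w' ⟨g1, g2⟩
    simp only [upv_fst, upv_val] at g1 g2
    have hne' := (ne_iff u v).mp hne
    have hm : w'.2.val ≤ s := common_no_top (by omega) (by omega) g1 g2 hne'
    refine hcn (dnv s w') ⟨?_, ?_⟩ <;> rw [dnv_fst, dnv_val s w' hm] <;> assumption
  · rw [ne_iff] at hne ⊢
    simpa using hne

lemma P3_down {s : ℕ} {u v : ZTV (s+1)} (hu : u.2.val ≤ s) (hv : v.2.val ≤ s)
    (h : P3 (s+1) u v) : P3 s (dnv s u) (dnv s v) := by
  obtain ⟨⟨w, h1, x, h2, h3⟩, hna, hcn, hne⟩ := h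
  have hbounds := chain_no_top hu hv (by omega) h1 h2 h3 hna
  refine ⟨⟨dnv s w, ?_, dnv s x, ?_, ?_⟩, ?_, ?_, ?_⟩
  · rw [dnv_fst, dnv_fst, dnv_val s u hu, dnv_val s w hbounds.1]; exact h1
  · rw [dnv_fst, dnv_fst, dnv_val s w hbounds.1, dnv_val s x hbounds.2]; exact h2
  · rw [dnv_fst, dnv_fst, dnv_val s x hbounds.2, dnv_val s v hv]; exact h3
  · rw [dnv_fst, dnv_fst, dnv_val s u hu, dnv_val s v hv]; exact hna
  · rintro w' ⟨g1, g2⟩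
    rw [dnv_fst, dnv_val s u hu] at g1
    rw [dnv_fst, dnv_val s v hv] at g2
    exact hcn (upv s w') ⟨g1, g2⟩
  · rw [ne_iff] at hne ⊢
    rw [dnv_fst, dnv_fst, dnv_val s u hu, dnv_val s v hv]
    exact hne

def Fcnt (r : ℕ) : ℕ := (Finset.univ.filter fun q : ZTV r × ZTV r => P3 r q.1 q.2).card

def Tcnt (r : ℕ) : ℕ :=
  (Finset.univ.filter fun q : ZTV r × ZTV r =>
    P3 r q.1 q.2 ∧ (q.1.2.val = r ∨ q.2.2.val = r)).card

lemma Fcnt_succ (s : ℕ) : Fcnt (s+1) = Fcnt s + Tcnt (s+1) := by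
  classical
  have hsplit := Finset.card_filter_add_card_filter_not
    (s := Finset.univ.filter fun q : ZTV (s+1) × ZTV (s+1) => P3 (s+1) q.1 q.2)
    (p := fun q => (q.1.2.val = s+1 ∨ q.2.2.val = s+1))
  rw [Finset.filter_filter, Finset.filter_filter] at hsplit
  have hT : ((Finset.univ : Finset (ZTV (s+1) × ZTV (s+1))).filter
      fun q => P3 (s+1) q.1 q.2 ∧ (q.1.2.val = s+1 ∨ q.2.2.val = s+1)).card = Tcnt (s+1) := by
    rw [Tcnt]
  have hF : ((Finset.univ : Finset (ZTV (s+1) × ZTV (s+1))).filter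
      fun q => P3 (s+1) q.1 q.2 ∧ ¬(q.1.2.val = s+1 ∨ q.2.2.val = s+1)).card = Fcnt s := by
    rw [Fcnt]
    apply Finset.card_nbij' (i := fun q => (dnv s q.1, dnv s q.2))
      (j := fun q => (upv s q.1, upv s q.2))
    · rintro ⟨u, v⟩ hq
      simp only [Finset.mem_coe, Finset.mem_filter, Finset.mem_univ, true_and] at hq ⊢
      obtain ⟨hP, hnt⟩ := hq
      have hu : u.2.val ≤ s := by have := u.2.isLt; omega
      have hv : v.2.val ≤ s := by have := v.2.isLt; omega
      exact P3_down hu hv hP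
    · rintro ⟨u, v⟩ hq
      simp only [Finset.mem_coe, Finset.mem_filter, Finset.mem_univ, true_and] at hq ⊢
      refine ⟨P3_up hq, ?_⟩
      have := u.2.isLt; have := v.2.isLt
      simp only [upv_val]
      omega
    · rintro ⟨u, v⟩ hq
      simp only [Finset.mem_coe, Finset.mem_filter, Finset.mem_univ, true_and] at hq
      have hu : u.2.val ≤ s := by have := u.2.isLt; omega
      have hv : v.2.val ≤ s := by have := v.2.isLt; omega
      simp only [Prod.ext_iff, upv, dnv, Fin.ext_iff]
      simp
      omega
    · rintro ⟨u, v⟩ hq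
      have := u.2.isLt; have := v.2.isLt
      simp only [Prod.ext_iff, upv, dnv, Fin.ext_iff]
      simp
      omega
  rw [Fcnt, ← hsplit, hT, hF]
  ring

def shdn (s : ℕ) (p : ZTV (s+1)) : ZTV s := (p.1 + 1, ⟨p.2.val - 1, by omega⟩)
def shup (s : ℕ) (p : ZTV s) : ZTV (s+1) := (p.1 - 1, ⟨p.2.val + 1, by omega⟩)

@[simp] lemma shdn_fst (s : ℕ) (p : ZTV (s+1)) : (shdn s p).1 = p.1 + 1 := rfl
@[simp] lemma shdn_val (s : ℕ) (p : ZTV (s+1)) : (shdn s p).2.val = p.2.val - 1 := rfl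
@[simp] lemma shup_fst (s : ℕ) (p : ZTV s) : (shup s p).1 = p.1 - 1 := rfl
@[simp] lemma shup_val (s : ℕ) (p : ZTV s) : (shup s p).2.val = p.2.val + 1 := rfl

lemma layers_pos {s : ℕ} (hs : 3 ≤ s) {u v : ZTV (s+1)} (h : P3 (s+1) u v)
    (ht : u.2.val = s+1 ∨ v.2.val = s+1) :
    1 ≤ u.2.val ∧ 1 ≤ v.2.val := by
  obtain ⟨⟨w, h1, x, h2, h3⟩, -, -, -⟩ := h
  have s1 := h1.step; have s2 := h2.step; have s3 := h3.step
  omega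

lemma chain_pos {s : ℕ} (hs : 3 ≤ s) {ju jv jw jx : ℕ}
    (_hju : ju ≤ s+1) (_hjv : jv ≤ s+1) (hjw : jw ≤ s+1) (hjx : jx ≤ s+1)
    (s1 : ju ≤ jw + 1 ∧ jw ≤ ju + 1) (s2 : jw ≤ jx + 1 ∧ jx ≤ jw + 1)
    (s3 : jx ≤ jv + 1 ∧ jv ≤ jx + 1)
    (ht : ju = s+1 ∨ jv = s+1) : 1 ≤ jw ∧ 1 ≤ jx := by omega

lemma P3_sdn {s : ℕ} (hs : 3 ≤ s) {u v : ZTV (s+1)} (h : P3 (s+1) u v)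
    (ht : u.2.val = s+1 ∨ v.2.val = s+1) : P3 s (shdn s u) (shdn s v) := by
  obtain ⟨hu1, hv1⟩ := layers_pos hs h ht
  obtain ⟨⟨w, h1, x, h2, h3⟩, hna, hcn, hne⟩ := h
  have hwx := chain_pos hs (by omega) (by omega) (by omega) (by omega)
    h1.step h2.step h3.step ht
  refine ⟨⟨shdn s w, ?_, shdn s x, ?_, ?_⟩, ?_, ?_, ?_⟩
  · simpa using h1.shift_down hu1 hwx.1
  · simpa using h2.shift_down hwx.1 hwx.2
  · simpa using h3.shift_down hwx.2 hv1
  · intro g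
    simp only [shdn_fst, shdn_val] at g
    have g2 := g.shift_up
    rw [add_sub_cancel_right, add_sub_cancel_right,
      (show u.2.val - 1 + 1 = u.2.val by omega),
      (show v.2.val - 1 + 1 = v.2.val by omega)] at g2
    exact hna g2
  · rintro w' ⟨g1, g2⟩
    simp only [shdn_fst, shdn_val] at g1 g2
    have g1' := g1.shift_up
    have g2' := g2.shift_up
    rw [add_sub_cancel_right, (show u.2.val - 1 + 1 = u.2.val by omega)] at g1'
    rw [add_sub_cancel_right, (show v.2.val - 1 + 1 = v.2.val by omega)] at g2'
    exact hcn (w'.1 - 1, ⟨w'.2.val + 1, by omega⟩) ⟨g1', g2'⟩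
  · rw [ne_iff] at hne ⊢
    simp only [shdn_fst, shdn_val]
    intro ⟨e1, e2⟩
    exact hne ⟨by rwa [add_left_inj] at e1, by omega⟩

lemma P3_sup {s : ℕ} (hs : 3 ≤ s) {u v : ZTV s} (h : P3 s u v)
    (ht : u.2.val = s ∨ v.2.val = s) : P3 (s+1) (shup s u) (shup s v) := by
  obtain ⟨⟨w, h1, x, h2, h3⟩, hna, hcn, hne⟩ := h
  refine ⟨⟨shup s w, ?_, shup s x, ?_, ?_⟩, ?_, ?_, ?_⟩
  · simpa using h1.shift_up
  · simpa using h2.shift_up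
  · simpa using h3.shift_up
  · intro g
    simp only [shup_fst, shup_val] at g
    have g2 := g.shift_down (by omega) (by omega)
    rw [sub_add_cancel, sub_add_cancel, Nat.add_sub_cancel, Nat.add_sub_cancel] at g2
    exact hna g2
  · rintro w' ⟨g1, g2⟩
    simp only [shup_fst, shup_val] at g1 g2
    have hm : 1 ≤ w'.2.val := by
      have t1 := g1.step; have t2 := g2.step
      omega
    have g1' := g1.shift_down (by omega) hm
    have g2' := g2.shift_down hm (by omega)
    rw [sub_add_cancel, Nat.add_sub_cancel] at g1'
    rw [sub_add_cancel, Nat.add_sub_cancel] at g2'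
    exact hcn (w'.1 + 1, ⟨w'.2.val - 1, by omega⟩) ⟨g1', g2'⟩
  · rw [ne_iff] at hne ⊢
    simp only [shup_fst, shup_val]
    intro ⟨e1, e2⟩
    exact hne ⟨by rwa [sub_left_inj] at e1, by omega⟩

lemma Tcnt_shift (s : ℕ) (hs : 3 ≤ s) : Tcnt (s+1) = Tcnt s := by
  classical
  unfold Tcnt
  apply Finset.card_nbij' (i := fun q => (shdn s q.1, shdn s q.2))
    (j := fun q => (shup s q.1, shup s q.2))
  · rintro ⟨u, v⟩ hq
    simp only [Finset.mem_coe, Finset.mem_filter, Finset.mem_univ, true_and] at hq ⊢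
    obtain ⟨hP, htc⟩ := hq
    refine ⟨P3_sdn hs hP htc, ?_⟩
    simp only [shdn_val]
    omega
  · rintro ⟨u, v⟩ hq
    simp only [Finset.mem_coe, Finset.mem_filter, Finset.mem_univ, true_and] at hq ⊢
    obtain ⟨hP, htc⟩ := hq
    have hb : u.2.val ≤ s ∧ v.2.val ≤ s := ⟨by omega, by omega⟩
    refine ⟨P3_sup hs hP htc, ?_⟩
    simp only [shup_val]
    omega
  · rintro ⟨u, v⟩ hq
    simp only [Finset.mem_coe, Finset.mem_filter, Finset.mem_univ, true_and] at hq
    obtain ⟨hP, htc⟩ := hq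
    obtain ⟨hu1, hv1⟩ := layers_pos hs hP htc
    simp [Prod.ext_iff, shup, shdn, Fin.ext_iff]
    omega
  · rintro ⟨u, v⟩ hq
    simp [Prod.ext_iff, shup, shdn, Fin.ext_iff]

lemma ZT_adj_iff (r : ℕ) (u v : ZTV r) :
    (ZT r 3).Adj u v ↔ AdjC u.1 v.1 u.2.val v.2.val := by
  obtain ⟨a, j⟩ := u
  obtain ⟨b, k⟩ := v
  have hne1 : ∀ x : ZMod (2*3), x ≠ x + 1 := by decide
  simp only [ZT, SimpleGraph.fromRel_adj, AdjC]
  constructor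
  · rintro ⟨hne, h | h⟩
    · rcases h with ⟨h1, h2⟩ | ⟨h1, h2, h3⟩
      · exact Or.inl ⟨congrArg Fin.val h1, Or.inl h2⟩
      · exact Or.inr ⟨h1, Or.inl ⟨h2, h3⟩⟩
    · rcases h with ⟨h1, h2⟩ | ⟨h1, h2, h3⟩
      · exact Or.inl ⟨(congrArg Fin.val h1).symm, Or.inr h2⟩
      · exact Or.inr ⟨h1.symm, Or.inr ⟨h2, h1 ▸ h3⟩⟩
  · rintro (⟨h1, h2 | h2⟩ | ⟨h1, ⟨h2, h3⟩ | ⟨h2, h3⟩⟩)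
    · exact ⟨by simp [Prod.ext_iff]; intro hab; exact absurd (hab ▸ h2) (hne1 a),
        Or.inl (Or.inl ⟨Fin.ext h1, h2⟩)⟩
    · exact ⟨by simp [Prod.ext_iff]; intro hab; exact absurd (hab ▸ h2) (hne1 b),
        Or.inr (Or.inl ⟨(Fin.ext h1).symm, h2⟩)⟩
    · exact ⟨by simp [Prod.ext_iff]; omega, Or.inl (Or.inr ⟨h1, h2, h3⟩)⟩
    · exact ⟨by simp [Prod.ext_iff]; omega, Or.inr (Or.inr ⟨h1.symm, h2, h1 ▸ h3⟩)⟩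


private lemma walk_len1 {V : Type*} {G : SimpleGraph V} {u v : V} (p : G.Walk u v)
    (hp : p.length = 1) : G.Adj u v := by
  cases p with
  | nil => simp at hp
  | cons h q =>
    cases q with
    | nil => exact h
    | cons h' q' => simp at hp

private lemma walk_len2 {V : Type*} {G : SimpleGraph V} {u v : V} (p : G.Walk u v)
    (hp : p.length = 2) : ∃ w, G.Adj u w ∧ G.Adj w v := by
  cases p with
  | nil => simp at hp
  | cons h q => exact ⟨_, h, walk_len1 q (by simpa using hp)⟩

private lemma walk_len3 {V : Type*} {G : SimpleGraph V} {u v : V} (p : G.Walk u v)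
    (hp : p.length = 3) : ∃ w x, G.Adj u w ∧ G.Adj w x ∧ G.Adj x v := by
  cases p with
  | nil => simp at hp
  | cons h q =>
    obtain ⟨x, h1, h2⟩ := walk_len2 q (by simpa using hp)
    exact ⟨_, x, h, h1, h2⟩

theorem dist_eq_three_iff {V : Type*} (G : SimpleGraph V) (u v : V) :
    G.dist u v = 3 ↔ (∃ w x, G.Adj u w ∧ G.Adj w x ∧ G.Adj x v) ∧
      ¬ G.Adj u v ∧ (∀ w, ¬ (G.Adj u w ∧ G.Adj w v)) ∧ u ≠ v := by
  constructor
  · intro h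
    have hre : G.Reachable u v := by
      by_contra hc
      rw [SimpleGraph.dist_eq_zero_of_not_reachable hc] at h
      omega
    obtain ⟨p, hp⟩ := hre.exists_walk_length_eq_dist
    rw [h] at hp
    refine ⟨walk_len3 p hp, ?_, ?_, ?_⟩
    · intro hadj
      have := SimpleGraph.dist_le (G := G) (.cons hadj .nil)
      simp at this; omega
    · rintro w ⟨h1, h2⟩
      have := SimpleGraph.dist_le (G := G) (.cons h1 (.cons h2 .nil))
      simp at this; omega
    · intro he; subst he; rw [SimpleGraph.dist_self] at h; omega
  · rintro ⟨⟨w, x, h1, h2, h3⟩, hna, hcn, hne⟩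
    have hle : G.dist u v ≤ 3 := by
      have := SimpleGraph.dist_le (G := G) (.cons h1 (.cons h2 (.cons h3 .nil)))
      simpa using this
    have hre : G.Reachable u v := ⟨.cons h1 (.cons h2 (.cons h3 .nil))⟩
    obtain ⟨p, hp⟩ := hre.exists_walk_length_eq_dist
    interval_cases h : G.dist u v
    · exact absurd (hre.dist_eq_zero_iff.mp h) hne
    · exact absurd (walk_len1 p hp) hna
    · obtain ⟨w', hw⟩ := walk_len2 p hp
      exact absurd hw (hcn w')
    · rfl

lemma dist3_iff (r : ℕ) (u v : ZTV r) : (ZT r 3).dist u v = 3 ↔ P3 r u v := by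
  rw [dist_eq_three_iff]
  unfold P3
  simp only [ZT_adj_iff]
  constructor
  · rintro ⟨⟨w, x, h1, h2, h3⟩, h4, h5, h6⟩
    exact ⟨⟨w, h1, x, h2, h3⟩, h4, fun w hw => h5 w hw, h6⟩
  · rintro ⟨⟨w, h1, x, h2, h3⟩, h4, h5, h6⟩
    exact ⟨⟨w, x, h1, h2, h3⟩, h4, fun w hw => h5 w hw, h6⟩


lemma two_mul_wp (r : ℕ) : 2 * wienerPolarity (ZT r 3) = Fcnt r := by
  classical
  unfold wienerPolarity
  rw [two_mul_sym2_card (fun u v => (ZT r 3).dist u v)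
    (fun _ _ => SimpleGraph.dist_comm) (fun u => by simp [SimpleGraph.dist_self])]
  unfold Fcnt
  apply congrArg
  apply Finset.filter_congr
  intro q _
  exact dist3_iff r q.1 q.2

set_option maxRecDepth 100000 in
set_option maxHeartbeats 4000000 in
lemma Fcnt_base1 : Fcnt 1 = 42 := by decide
set_option maxRecDepth 100000 in
set_option maxHeartbeats 4000000 in
lemma Fcnt_base2 : Fcnt 2 = 90 := by decide
set_option maxRecDepth 100000 in
set_option maxHeartbeats 4000000 in
lemma Fcnt_base3 : Fcnt 3 = 138 := by decide
set_option maxRecDepth 100000 in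
set_option maxHeartbeats 8000000 in
lemma Fcnt_base4 : Fcnt 4 = 186 := by decide

lemma Tcnt4 : Tcnt 4 = 48 := by
  have h := Fcnt_succ 3
  norm_num [Fcnt_base3, Fcnt_base4] at h
  omega

lemma Tcnt_const (s : ℕ) (hs : 4 ≤ s) : Tcnt s = 48 := by
  induction s with
  | zero => omega
  | succ n ih =>
    rcases Nat.lt_or_ge n 4 with h | h
    · have h3 : n = 3 := by omega
      subst h3
      norm_num [Tcnt4]
    · rw [Tcnt_shift n (by omega), ih (by omega)]

lemma Fcnt_eq (r : ℕ) (hr : 1 ≤ r) : Fcnt r = 48 * r - 6 := by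
  induction r with
  | zero => omega
  | succ n ih =>
    rcases Nat.lt_or_ge n 4 with h | h
    · interval_cases n <;>
        norm_num [Fcnt_base1, Fcnt_base2, Fcnt_base3, Fcnt_base4]
    · rw [Fcnt_succ n, ih (by omega), Tcnt_const (n+1) (by omega)]
      omega

end WienerAux

theorem wienerPolarity_ZT_three (r : ℕ) (hr : 1 ≤ r) :
    wienerPolarity (ZT r 3) = 24 * r - 3 := by
  have h1 := two_mul_wp r
  rw [Fcnt_eq r hr] at h1
  omega
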